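/- Let T be a finite connected multigraph with signed edges and e a positive edge lying in no all-positive cycle. If T' is obtained by flipping e to negative, then the maximum of η over spanning trees decreases by exactly 2: max_{t ⊆ T'} η'(t) = max_{t ⊆ T} η(t) − 2. -/

import Mathlib

/-- A finite multigraph: vertex type `V`, edge type `E`, each edge has an
unordered pair of endpoints (loops and parallel edges are allowed). -/
structure Multigraph where
  V : Type
  E : Type
  fV : Fintype V
  fE : Fintype E
  dV : DecidableEq V
  dE : DecidableEq E
  ends : E → Sym2 V

attribute [instance] Multigraph.fV Multigraph.fE Multigraph.dV Multigraph.dE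

namespace Multigraph

variable (G : Multigraph)

/-- `u` and `v` are joined by an edge of the edge set `S`. -/
def adjOn (S : Finset G.E) (u v : G.V) : Prop :=
  ∃ e ∈ S, G.ends e = s(u, v)

/-- `u` and `v` are joined by a walk using only edges of `S`. -/
def reach (S : Finset G.E) (u v : G.V) : Prop :=
  Relation.ReflTransGen (G.adjOn S) u v

/-- The spanning subgraph with edge set `S` is connected. -/
def connectedOn (S : Finset G.E) : Prop := ∀ u v : G.V, G.reach S u v

/-- The multigraph is connected. -/
def Connected : Prop := Nonempty G.V ∧ G.connectedOn Finset.univ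

/-- The subgraph with edge set `S` contains no cycle: no edge of `S` has its
endpoints joined within `S` minus that edge. -/
def acyclicOn (S : Finset G.E) : Prop :=
  ∀ e ∈ S, ∀ u v : G.V, G.ends e = s(u, v) → ¬ G.reach (S.erase e) u v

/-- `S` is the edge set of a spanning tree: connected and acyclic spanning
subgraph. -/
def IsSpanningTree (S : Finset G.E) : Prop :=
  G.connectedOn S ∧ G.acyclicOn S

/-- the edge `e` lies in a cycle all of whose edges belong to `S`. -/
def InCycleOn (S : Finset G.E) (e : G.E) : Prop :=
  e ∈ S ∧ ∃ u v : G.V, G.ends e = s(u, v) ∧ G.reach (S.erase e) u v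

/-- the positive edges, for a sign labelling (`true` = positive). -/
def posEdges (sign : G.E → Bool) : Finset G.E :=
  Finset.univ.filter fun e => sign e = true

/-- the negative edges. -/
def negEdges (sign : G.E → Bool) : Finset G.E :=
  Finset.univ.filter fun e => sign e = false

/-- `e` lies in a cycle consisting entirely of positive edges. -/
def InPositiveCycle (sign : G.E → Bool) (e : G.E) : Prop :=
  G.InCycleOn (G.posEdges sign) e

/-- `e` lies in a cycle consisting entirely of negative edges. -/
def InNegativeCycle (sign : G.E → Bool) (e : G.E) : Prop :=
  G.InCycleOn (G.negEdges sign) e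

/-- `η(t)` = (# positive edges of `t`) − (# negative edges of `t`). -/
def eta (sign : G.E → Bool) (t : Finset G.E) : ℤ :=
  ((t.filter fun e => sign e = true).card : ℤ) -
    (t.filter fun e => sign e = false).card

/-- `S` contains a cycle. -/
def Dependent (S : Finset G.E) : Prop := ¬ G.acyclicOn S

/-- `C` is (the edge set of) a cycle: a minimal dependent set. -/
def IsCircuit (C : Finset G.E) : Prop :=
  G.Dependent C ∧ ∀ C' ⊂ C, G.acyclicOn C'

/-- the set of values of `η` on spanning trees. -/
def etaSet (sign : G.E → Bool) : Set ℤ :=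
  {x | ∃ t : Finset G.E, G.IsSpanningTree t ∧ G.eta sign t = x}

lemma adjOn_symm {S : Finset G.E} {u v : G.V} (h : G.adjOn S u v) : G.adjOn S v u := by
  obtain ⟨g, hg, hends⟩ := h
  exact ⟨g, hg, hends.trans (Sym2.eq_swap)⟩

lemma reach_symm {S : Finset G.E} {u v : G.V} (h : G.reach S u v) : G.reach S v u := by
  induction h with
  | refl => exact .refl
  | tail _ hbc ih => exact Relation.ReflTransGen.head (G.adjOn_symm hbc) ih

lemma reach_mono {S S' : Finset G.E} (hSS : S ⊆ S') {u v : G.V} (h : G.reach S u v) :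
    G.reach S' u v :=
  Relation.ReflTransGen.mono (fun _ _ ⟨g, hg, hge⟩ => ⟨g, hSS hg, hge⟩) _ _ h

lemma reach_decompose {S : Finset G.E} {f : G.E} {v : G.V} :
    ∀ {u}, G.reach S u v → ¬ G.reach (S.erase f) u v →
    ∃ a b, G.ends f = s(a, b) ∧ G.reach (S.erase f) u a ∧ G.reach (S.erase f) b v := by
  intro u h
  induction h using Relation.ReflTransGen.head_induction_on with
  | refl => exact fun hnf => absurd .refl hnf
  | head hadj hwv ih =>
    rename_i x w
    intro hnf
    obtain ⟨g, hg, hge⟩ := hadj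
    by_cases hgf : g = f
    · subst hgf
      by_cases hwv' : G.reach (S.erase g) w v
      · exact ⟨x, w, hge, .refl, hwv'⟩
      · obtain ⟨a, b, hab, hwa, hbv⟩ := ih hwv'
        rcases Sym2.eq_iff.mp (hge.symm.trans hab) with ⟨hax, hbw⟩ | ⟨hax, hbw⟩
        · subst hax; subst hbw
          exact absurd ((G.reach_symm hwa).trans hbv) hnf
        · subst hax; subst hbw
          exact absurd hbv hnf
    · have hadj' : G.adjOn (S.erase f) x w := ⟨g, Finset.mem_erase.mpr ⟨hgf, hg⟩, hge⟩
      by_cases hwv' : G.reach (S.erase f) w v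
      · exact absurd (Relation.ReflTransGen.head hadj' hwv') hnf
      · obtain ⟨a, b, hab, hwa, hbv⟩ := ih hwv'
        exact ⟨a, b, hab, Relation.ReflTransGen.head hadj' hwa, hbv⟩

lemma exists_sep (sign : G.E → Bool) {t : Finset G.E} (hA : G.acyclicOn t) {u v : G.V}
    (hre : G.reach t u v)
    (hnp : ¬ G.reach (t.filter fun g => sign g = true) u v) :
    ∃ f ∈ t, sign f = false ∧ ¬ G.reach (t.erase f) u v := by
  classical
  have hne : (t.powerset.filter fun P => G.reach P u v).Nonempty :=
    ⟨t, by simp [Finset.mem_filter, Finset.mem_powerset, hre]⟩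
  obtain ⟨P, hP, hmin⟩ := Finset.exists_min_image _ Finset.card hne
  rw [Finset.mem_filter, Finset.mem_powerset] at hP
  obtain ⟨hPt, hPr⟩ := hP
  have hminP : ∀ f ∈ P, ¬ G.reach (P.erase f) u v := by
    intro f hf hr
    have hmem : P.erase f ∈ t.powerset.filter fun P => G.reach P u v := by
      rw [Finset.mem_filter, Finset.mem_powerset]
      exact ⟨(Finset.erase_subset _ _).trans hPt, hr⟩
    have h1 := hmin _ hmem
    have h2 := Finset.card_erase_lt_of_mem hf
    omega
  by_cases hall : ∀ f ∈ P, sign f = true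
  · exact absurd (G.reach_mono (fun g hg => Finset.mem_filter.mpr ⟨hPt hg, hall g hg⟩) hPr) hnp
  · push_neg at hall
    obtain ⟨f, hfP, hsf⟩ := hall
    have hsf' : sign f = false := by simpa using hsf
    refine ⟨f, hPt hfP, hsf', ?_⟩
    intro hr
    obtain ⟨a, b, hab, hua, hbv⟩ := G.reach_decompose hPr (hminP f hfP)
    exact hA f (hPt hfP) a b hab
      (((G.reach_symm (G.reach_mono (Finset.erase_subset_erase _ hPt) hua)).trans hr).trans
        (G.reach_symm (G.reach_mono (Finset.erase_subset_erase _ hPt) hbv)))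

lemma exchange {t : Finset G.E} (ht : G.IsSpanningTree t) {e f : G.E} {u v : G.V}
    (he : G.ends e = s(u, v)) (het : e ∉ t) (hf : f ∈ t)
    (hsep : ¬ G.reach (t.erase f) u v) :
    G.IsSpanningTree (insert e (t.erase f)) := by
  classical
  set t' : Finset G.E := insert e (t.erase f) with ht'
  have hsub : t.erase f ⊆ t' := Finset.subset_insert _ _
  have estep : G.reach t' u v :=
    Relation.ReflTransGen.single ⟨e, Finset.mem_insert_self _ _, he⟩
  obtain ⟨a, b, hab, hua, hbv⟩ := G.reach_decompose (ht.1 u v) hsep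
  have step : ∀ x y, G.adjOn t x y → G.reach t' x y := by
    rintro x y ⟨g, hg, hge⟩
    by_cases hgf : g = f
    · subst hgf
      rcases Sym2.eq_iff.mp (hab.symm.trans hge) with ⟨hax, hbw⟩ | ⟨hax, hbw⟩
      · subst hax; subst hbw
        exact ((G.reach_mono hsub (G.reach_symm hua)).trans estep).trans
          (G.reach_mono hsub (G.reach_symm hbv))
      · subst hax; subst hbw
        exact ((G.reach_mono hsub hbv).trans (G.reach_symm estep)).trans
          (G.reach_mono hsub hua)
    · exact Relation.ReflTransGen.single ⟨g, hsub (Finset.mem_erase.mpr ⟨hgf, hg⟩), hge⟩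
  constructor
  · intro x y
    have h := ht.1 x y
    induction h with
    | refl => exact .refl
    | tail _ hbc ih => exact ih.trans (step _ _ hbc)
  · intro g hg x y hgxy hre
    have hef : e ∉ t.erase f := fun h => het (Finset.mem_of_mem_erase h)
    by_cases hge : g = e
    · subst hge
      rw [ht', Finset.erase_insert hef] at hre
      rcases Sym2.eq_iff.mp (he.symm.trans hgxy) with ⟨hx, hy⟩ | ⟨hx, hy⟩
      · subst hx; subst hy; exact hsep hre
      · subst hx; subst hy; exact hsep (G.reach_symm hre)
    · have hgt : g ∈ t.erase f := by
        rcases Finset.mem_insert.mp hg with h | h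
        · exact absurd h hge
        · exact h
      have hgtt : g ∈ t := Finset.mem_of_mem_erase hgt
      have hQ : t'.erase g = insert e ((t.erase f).erase g) := by
        rw [ht', Finset.erase_insert_of_ne (Ne.symm hge)]
      set Q : Finset G.E := (t.erase f).erase g with hQdef
      have hQt : Q ⊆ t.erase g :=
        Finset.erase_subset_erase _ (Finset.erase_subset _ _)
      have hQf : Q ⊆ t.erase f := Finset.erase_subset _ _
      rw [hQ] at hre
      by_cases hrQ : G.reach Q x y
      · exact ht.2 g hgtt x y hgxy (G.reach_mono hQt hrQ)
      · have heQ : e ∉ Q := fun h => het (Finset.mem_of_mem_erase (Finset.mem_of_mem_erase h))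
        have hErase : (insert e Q).erase e = Q := Finset.erase_insert heQ
        have hnre : ¬ G.reach ((insert e Q).erase e) x y := by rw [hErase]; exact hrQ
        obtain ⟨a', b', hab', hxa, hby⟩ := G.reach_decompose hre hnre
        rw [hErase] at hxa hby
        have gstep : G.adjOn (t.erase f) x y := ⟨g, hgt, hgxy⟩
        rcases Sym2.eq_iff.mp (he.symm.trans hab') with ⟨hx1, hy1⟩ | ⟨hx1, hy1⟩
        · subst hx1; subst hy1
          exact hsep (((G.reach_symm (G.reach_mono hQf hxa)).trans
            (Relation.ReflTransGen.single gstep)).trans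
            (G.reach_symm (G.reach_mono hQf hby)))
        · subst hx1; subst hy1
          exact hsep (((G.reach_mono hQf hby).trans
            (Relation.ReflTransGen.single (G.adjOn_symm gstep))).trans
            (G.reach_mono hQf hxa))

lemma eta_swap (sign : G.E → Bool) {t : Finset G.E} {e f : G.E}
    (het : e ∉ t) (hf : f ∈ t) (hse : sign e = true) (hsf : sign f = false) :
    G.eta sign (insert e (t.erase f)) = G.eta sign t + 2 := by
  classical
  have h1 : (insert e (t.erase f)).filter (fun g => sign g = true)
      = insert e (t.filter fun g => sign g = true) := by
    ext g
    simp only [Finset.mem_filter, Finset.mem_insert, Finset.mem_erase]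
    constructor
    · rintro ⟨h | ⟨hgf, hgt⟩, hs⟩
      · exact Or.inl h
      · exact Or.inr ⟨hgt, hs⟩
    · rintro (h | ⟨hgt, hs⟩)
      · subst h; exact ⟨Or.inl rfl, hse⟩
      · refine ⟨Or.inr ⟨?_, hgt⟩, hs⟩
        rintro rfl; rw [hsf] at hs; exact Bool.noConfusion hs
  have h2 : (insert e (t.erase f)).filter (fun g => sign g = false)
      = (t.filter fun g => sign g = false).erase f := by
    ext g
    simp only [Finset.mem_filter, Finset.mem_insert, Finset.mem_erase]
    constructor
    · rintro ⟨h | ⟨hgf, hgt⟩, hs⟩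
      · subst h; rw [hse] at hs; exact Bool.noConfusion hs
      · exact ⟨hgf, hgt, hs⟩
    · rintro ⟨hgf, hgt, hs⟩
      exact ⟨Or.inr ⟨hgf, hgt⟩, hs⟩
  have he1 : e ∉ t.filter fun g => sign g = true := fun h => het (Finset.mem_of_mem_filter _ h)
  have hf1 : f ∈ t.filter fun g => sign g = false := Finset.mem_filter.mpr ⟨hf, hsf⟩
  rw [eta, eta, h1, h2, Finset.card_insert_of_notMem he1, Finset.card_erase_of_mem hf1]
  have hpos : 0 < (t.filter fun g => sign g = false).card := Finset.card_pos.mpr ⟨f, hf1⟩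
  omega

lemma eta_update_mem (sign : G.E → Bool) {t : Finset G.E} {e : G.E}
    (het : e ∈ t) (hse : sign e = true) :
    G.eta (Function.update sign e false) t = G.eta sign t - 2 := by
  classical
  have h1 : (t.filter fun g => Function.update sign e false g = true)
      = (t.filter fun g => sign g = true).erase e := by
    ext g
    simp only [Finset.mem_filter, Finset.mem_erase]
    constructor
    · rintro ⟨hgt, hs⟩
      by_cases hge : g = e
      · subst hge; rw [Function.update_self] at hs; exact Bool.noConfusion hs
      · rw [Function.update_of_ne hge] at hs; exact ⟨hge, hgt, hs⟩
    · rintro ⟨hge, hgt, hs⟩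
      exact ⟨hgt, by rw [Function.update_of_ne hge]; exact hs⟩
  have h2 : (t.filter fun g => Function.update sign e false g = false)
      = insert e (t.filter fun g => sign g = false) := by
    ext g
    simp only [Finset.mem_filter, Finset.mem_insert]
    constructor
    · rintro ⟨hgt, hs⟩
      by_cases hge : g = e
      · exact Or.inl hge
      · rw [Function.update_of_ne hge] at hs; exact Or.inr ⟨hgt, hs⟩
    · rintro (h | ⟨hgt, hs⟩)
      · subst h; exact ⟨het, by rw [Function.update_self]⟩
      · refine ⟨hgt, ?_⟩
        by_cases hge : g = e
        · subst hge; rw [hse] at hs; exact Bool.noConfusion hs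
        · rw [Function.update_of_ne hge]; exact hs
  have he1 : e ∈ t.filter fun g => sign g = true := Finset.mem_filter.mpr ⟨het, hse⟩
  have he2 : e ∉ t.filter fun g => sign g = false := by
    intro h
    have := (Finset.mem_filter.mp h).2
    rw [hse] at this; exact Bool.noConfusion this
  rw [eta, eta, h1, h2, Finset.card_erase_of_mem he1, Finset.card_insert_of_notMem he2]
  have hpos : 0 < (t.filter fun g => sign g = true).card := Finset.card_pos.mpr ⟨e, he1⟩
  omega

lemma eta_update_not_mem (sign : G.E → Bool) {t : Finset G.E} {e : G.E}
    (het : e ∉ t) :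
    G.eta (Function.update sign e false) t = G.eta sign t := by
  classical
  have key : ∀ b : Bool, (t.filter fun g => Function.update sign e false g = b)
      = t.filter fun g => sign g = b := by
    intro b
    apply Finset.filter_congr
    intro g hgt
    have hge : g ≠ e := fun h => het (h ▸ hgt)
    rw [Function.update_of_ne hge]
  rw [eta, eta, key, key]

lemma key_exchange (hconn : G.Connected) (sign : G.E → Bool) (e : G.E)
    (he : sign e = true) (hnc : ¬ G.InPositiveCycle sign e)
    {t : Finset G.E} (ht : G.IsSpanningTree t) (het : e ∉ t) :
    ∃ t', G.IsSpanningTree t' ∧ e ∈ t' ∧ G.eta sign t' = G.eta sign t + 2 := by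
  classical
  obtain ⟨u, v, huv⟩ : ∃ u v, G.ends e = s(u, v) := by
    obtain ⟨⟨u, v⟩, h⟩ := Quot.exists_rep (G.ends e)
    exact ⟨u, v, h.symm⟩
  have hru : G.reach t u v := ht.1 u v
  have hnp : ¬ G.reach (t.filter fun g => sign g = true) u v := by
    intro h
    apply hnc
    refine ⟨Finset.mem_filter.mpr ⟨Finset.mem_univ _, he⟩, u, v, huv, ?_⟩
    refine G.reach_mono ?_ h
    intro g hg
    rw [Finset.mem_filter] at hg
    refine Finset.mem_erase.mpr ⟨fun hge => het (hge ▸ hg.1), ?_⟩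
    exact Finset.mem_filter.mpr ⟨Finset.mem_univ _, hg.2⟩
  obtain ⟨f, hf, hsf, hsep⟩ := G.exists_sep sign ht.2 hru hnp
  exact ⟨insert e (t.erase f), G.exchange ht huv het hf hsep,
    Finset.mem_insert_self _ _, G.eta_swap sign het hf he hsf⟩

end Multigraph

/-- flipping to negative a positive edge that lies in no
all-positive cycle decreases the maximum of `η` over spanning trees by 2. -/
theorem stmt7 (G : Multigraph) (hconn : G.Connected) (sign : G.E → Bool)
    (e : G.E) (he : sign e = true) (hnc : ¬ G.InPositiveCycle sign e)
    (M M' : ℤ)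
    (hM : IsGreatest (G.etaSet sign) M)
    (hM' : IsGreatest (G.etaSet (Function.update sign e false)) M') :
    M' = M - 2 := by
  classical
  have key : ∀ t, G.IsSpanningTree t → e ∉ t → G.eta sign t + 2 ≤ M := by
    intro t ht hnet
    obtain ⟨t', ht', _, h2⟩ := G.key_exchange hconn sign e he hnc ht hnet
    have h3 : G.eta sign t' ≤ M := hM.2 ⟨t', ht', rfl⟩
    linarith
  have hle : M' ≤ M - 2 := by
    obtain ⟨t, ht, het⟩ := hM'.1
    by_cases hmem : e ∈ t
    · have h1 := G.eta_update_mem sign hmem he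
      have h2 : G.eta sign t ≤ M := hM.2 ⟨t, ht, rfl⟩
      linarith [het ▸ h1]
    · have h1 := G.eta_update_not_mem sign (t := t) (e := e) hmem
      have h2 := key t ht hmem
      rw [h1] at het
      linarith
  obtain ⟨t0, ht0, het0⟩ := hM.1
  have hmem0 : e ∈ t0 := by
    by_contra h
    have := key t0 ht0 h
    linarith [het0 ▸ this]
  have hmemM' : M - 2 ∈ G.etaSet (Function.update sign e false) := by
    refine ⟨t0, ht0, ?_⟩
    rw [G.eta_update_mem sign hmem0 he, het0]
  have hge : M - 2 ≤ M' := hM'.2 hmemM'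
  linarith
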